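/- arXiv:2102.08174 — 4 statements merged into one kernel-verified Lean document; each statement's English description precedes it below -/
import Mathlib

section
/- Let Ω be a finite nonempty probability space, z : Ω → Bool an instrument, and for each ω two potential treatments x₀(ω), x₁(ω) ∈ {0,1} and potential outcomes y₀(ω), y₁(ω) ∈ ℝ, with observed treatment x(ω) = x_{z(ω)}(ω) and observed outcome y(ω) = y₀(ω) + (y₁(ω) - y₀(ω))·x(ω). Assume z is independent of (x₀, x₁, y₀, y₁), monotonicity x₁(ω) ≥ x₀(ω) for all ω (no defiers), and that the set of compliers {ω : x₁(ω) = 1 ∧ x₀(ω) = 0} has positive probability. Then (E[y|z=1] - E[y|z=0]) / (E[x|z=1] - E[x|z=0]) = E[y₁ - y₀ | x₁ = 1 ∧ x₀ = 0], i.e., the Wald estimator equals the local average treatment effect on compliers. -/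
open scoped Classical

noncomputable section

variable {Ω : Type*} [Fintype Ω]

/-- Expectation on a finite probability space. -/
def expec (P f : Ω → ℝ) : ℝ := ∑ ω, P ω * f ω

/-- Probability of an event. -/
def pr (P : Ω → ℝ) (s : Ω → Prop) : ℝ := ∑ ω, if s ω then P ω else 0

/-- Conditional expectation given an event. -/
def condExp (P f : Ω → ℝ) (s : Ω → Prop) : ℝ :=
  (∑ ω, if s ω then P ω * f ω else 0) / pr P s

lemma pr_eq (P : Ω → ℝ) (s : Ω → Prop) [∀ ω, Decidable (s ω)] :
    pr P s = ∑ ω, if s ω then P ω else 0 := by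
  rw [pr]
  apply Finset.sum_congr rfl
  intro ω _
  split_ifs <;> rfl

lemma condExp_eq (P f : Ω → ℝ) (s : Ω → Prop) [∀ ω, Decidable (s ω)] :
    condExp P f s = (∑ ω, if s ω then P ω * f ω else 0) / pr P s := by
  rw [condExp]
  congr 1
  apply Finset.sum_congr rfl
  intro ω _
  split_ifs <;> rfl

/-- the Wald estimator equals the local average treatment effect
on compliers (LATE theorem). -/
theorem wald_eq_late
    (P : Ω → ℝ) (hP : ∀ ω, 0 ≤ P ω) (hPsum : ∑ ω, P ω = 1)
    (z : Ω → Bool) (x0 x1 : Ω → ℕ) (y0 y1 : Ω → ℝ)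
    (hx0le : ∀ ω, x0 ω ≤ 1) (hx1le : ∀ ω, x1 ω ≤ 1)
    (x : Ω → ℕ) (hx : ∀ ω, x ω = if z ω then x1 ω else x0 ω)
    (y : Ω → ℝ) (hy : ∀ ω, y ω = y0 ω + (y1 ω - y0 ω) * (x ω : ℝ))
    (hindep : ∀ g : ℕ → ℕ → ℝ → ℝ → ℝ,
      expec P (fun ω => (if z ω then (1 : ℝ) else 0) * g (x0 ω) (x1 ω) (y0 ω) (y1 ω))
        = expec P (fun ω => if z ω then (1 : ℝ) else 0)
            * expec P (fun ω => g (x0 ω) (x1 ω) (y0 ω) (y1 ω)))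
    (hmono : ∀ ω, x0 ω ≤ x1 ω)
    (hz1 : 0 < pr P (fun ω => z ω = true))
    (hz0 : 0 < pr P (fun ω => z ω = false))
    (hcompl : 0 < pr P (fun ω => x1 ω = 1 ∧ x0 ω = 0)) :
    (condExp P y (fun ω => z ω = true) - condExp P y (fun ω => z ω = false))
        / (condExp P (fun ω => (x ω : ℝ)) (fun ω => z ω = true)
            - condExp P (fun ω => (x ω : ℝ)) (fun ω => z ω = false))
      = condExp P (fun ω => y1 ω - y0 ω) (fun ω => x1 ω = 1 ∧ x0 ω = 0) := by
  classical
  have hE1def : pr P (fun ω => z ω = true)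
      = ∑ ω, if z ω = true then P ω else 0 := pr_eq P _
  have hE0def : pr P (fun ω => z ω = false)
      = ∑ ω, if z ω = false then P ω else 0 := pr_eq P _
  -- indicator expectation equals probability
  have hp1 : expec P (fun ω => if z ω then (1:ℝ) else 0)
      = pr P (fun ω => z ω = true) := by
    rw [hE1def, expec]
    apply Finset.sum_congr rfl
    intro ω _
    rw [mul_ite, mul_one, mul_zero]
  -- sum over z = true events
  have hA : ∀ g : ℕ → ℕ → ℝ → ℝ → ℝ,
      (∑ ω, if z ω = true then P ω * g (x0 ω) (x1 ω) (y0 ω) (y1 ω) else 0)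
        = pr P (fun ω => z ω = true)
            * expec P (fun ω => g (x0 ω) (x1 ω) (y0 ω) (y1 ω)) := by
    intro g
    have h := hindep g
    rw [hp1] at h
    rw [← h]
    simp [expec, mul_ite, ite_mul]
  -- probabilities sum to one
  have hsum : pr P (fun ω => z ω = true) + pr P (fun ω => z ω = false) = 1 := by
    rw [← hPsum, hE1def, hE0def, ← Finset.sum_add_distrib]
    apply Finset.sum_congr rfl
    intro ω _
    cases h : z ω <;> simp [h]
  -- sum over z = false events
  have hB : ∀ g : ℕ → ℕ → ℝ → ℝ → ℝ,
      (∑ ω, if z ω = false then P ω * g (x0 ω) (x1 ω) (y0 ω) (y1 ω) else 0)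
        = pr P (fun ω => z ω = false)
            * expec P (fun ω => g (x0 ω) (x1 ω) (y0 ω) (y1 ω)) := by
    intro g
    have hsplit : (∑ ω, if z ω = false then P ω * g (x0 ω) (x1 ω) (y0 ω) (y1 ω) else 0)
        = expec P (fun ω => g (x0 ω) (x1 ω) (y0 ω) (y1 ω))
          - (∑ ω, if z ω = true then P ω * g (x0 ω) (x1 ω) (y0 ω) (y1 ω) else 0) := by
      rw [eq_sub_iff_add_eq, expec, ← Finset.sum_add_distrib]
      apply Finset.sum_congr rfl
      intro ω _
      cases h : z ω <;> simp [h]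
    rw [hsplit, hA]
    have hp0 : pr P (fun ω => z ω = false) = 1 - pr P (fun ω => z ω = true) := by
      linarith
    rw [hp0]; ring
  -- conditional expectations given the instrument
  have hcT : ∀ g : ℕ → ℕ → ℝ → ℝ → ℝ,
      condExp P (fun ω => g (x0 ω) (x1 ω) (y0 ω) (y1 ω)) (fun ω => z ω = true)
        = expec P (fun ω => g (x0 ω) (x1 ω) (y0 ω) (y1 ω)) := by
    intro g
    rw [condExp_eq, hA]
    exact mul_div_cancel_left₀ _ hz1.ne'
  have hcF : ∀ g : ℕ → ℕ → ℝ → ℝ → ℝ,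
      condExp P (fun ω => g (x0 ω) (x1 ω) (y0 ω) (y1 ω)) (fun ω => z ω = false)
        = expec P (fun ω => g (x0 ω) (x1 ω) (y0 ω) (y1 ω)) := by
    intro g
    rw [condExp_eq, hB]
    exact mul_div_cancel_left₀ _ hz0.ne'
  -- identify observed variables on each z-event
  have hyT : condExp P y (fun ω => z ω = true)
      = expec P (fun ω => y0 ω + (y1 ω - y0 ω) * (x1 ω : ℝ)) := by
    have h1 : condExp P y (fun ω => z ω = true)
        = condExp P (fun ω => (fun a b c d => c + (d - c) * (b : ℝ)) (x0 ω) (x1 ω) (y0 ω) (y1 ω))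
            (fun ω => z ω = true) := by
      rw [condExp_eq, condExp_eq]
      congr 1
      apply Finset.sum_congr rfl
      intro ω _
      by_cases h : z ω = true <;> simp [h, hy, hx]
    rw [h1, hcT (fun a b c d => c + (d - c) * (b : ℝ))]
  have hyF : condExp P y (fun ω => z ω = false)
      = expec P (fun ω => y0 ω + (y1 ω - y0 ω) * (x0 ω : ℝ)) := by
    have h1 : condExp P y (fun ω => z ω = false)
        = condExp P (fun ω => (fun a b c d => c + (d - c) * (a : ℝ)) (x0 ω) (x1 ω) (y0 ω) (y1 ω))
            (fun ω => z ω = false) := by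
      rw [condExp_eq, condExp_eq]
      congr 1
      apply Finset.sum_congr rfl
      intro ω _
      by_cases h : z ω = false
      · have h' : z ω ≠ true := by simp [h]
        simp [h, hy, hx, h']
      · simp [h]
    rw [h1, hcF (fun a b c d => c + (d - c) * (a : ℝ))]
  have hxT : condExp P (fun ω => (x ω : ℝ)) (fun ω => z ω = true)
      = expec P (fun ω => (x1 ω : ℝ)) := by
    have h1 : condExp P (fun ω => (x ω : ℝ)) (fun ω => z ω = true)
        = condExp P (fun ω => (fun (a b : ℕ) (c d : ℝ) => (b : ℝ)) (x0 ω) (x1 ω) (y0 ω) (y1 ω))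
            (fun ω => z ω = true) := by
      rw [condExp_eq, condExp_eq]
      congr 1
      apply Finset.sum_congr rfl
      intro ω _
      by_cases h : z ω = true <;> simp [h, hx]
    rw [h1, hcT (fun (a b : ℕ) (c d : ℝ) => (b : ℝ))]
  have hxF : condExp P (fun ω => (x ω : ℝ)) (fun ω => z ω = false)
      = expec P (fun ω => (x0 ω : ℝ)) := by
    have h1 : condExp P (fun ω => (x ω : ℝ)) (fun ω => z ω = false)
        = condExp P (fun ω => (fun (a b : ℕ) (c d : ℝ) => (a : ℝ)) (x0 ω) (x1 ω) (y0 ω) (y1 ω))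
            (fun ω => z ω = false) := by
      rw [condExp_eq, condExp_eq]
      congr 1
      apply Finset.sum_congr rfl
      intro ω _
      by_cases h : z ω = false
      · have h' : z ω ≠ true := by simp [h]
        simp [h, hx, h']
      · simp [h]
    rw [h1, hcF (fun (a b : ℕ) (c d : ℝ) => (a : ℝ))]
  -- numerator
  have hnum : expec P (fun ω => y0 ω + (y1 ω - y0 ω) * (x1 ω : ℝ))
      - expec P (fun ω => y0 ω + (y1 ω - y0 ω) * (x0 ω : ℝ))
      = ∑ ω, if x1 ω = 1 ∧ x0 ω = 0 then P ω * (y1 ω - y0 ω) else 0 := by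
    rw [expec, expec, ← Finset.sum_sub_distrib]
    apply Finset.sum_congr rfl
    intro ω _
    by_cases hc : x1 ω = 1 ∧ x0 ω = 0
    · rw [if_pos hc, hc.1, hc.2]
      push_cast
      ring
    · have h0 := hx0le ω; have h1 := hx1le ω; have h2 := hmono ω
      have h' : x0 ω = x1 ω := by omega
      rw [if_neg hc, h']
      ring
  -- denominator
  have hden : expec P (fun ω => (x1 ω : ℝ)) - expec P (fun ω => (x0 ω : ℝ))
      = pr P (fun ω => x1 ω = 1 ∧ x0 ω = 0) := by
    rw [expec, expec, pr_eq, ← Finset.sum_sub_distrib]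
    apply Finset.sum_congr rfl
    intro ω _
    by_cases hc : x1 ω = 1 ∧ x0 ω = 0
    · rw [if_pos hc, hc.1, hc.2]
      push_cast
      ring
    · have h0 := hx0le ω; have h1 := hx1le ω; have h2 := hmono ω
      have h' : x0 ω = x1 ω := by omega
      rw [if_neg hc, h']
      ring
  rw [hyT, hyF, hxT, hxF, hnum, hden, condExp_eq]
end
end

section
/- In the binary potential-outcomes setup with instrument z independent of potential treatments and outcomes, if there are both compliers (x₀=0, x₁=1) with proportion π_c > 0 and defiers (x₀=1, x₁=0) with proportion π_d, with π_c ≠ π_d, then the Wald estimator equals E(β | compliers)·π_c/(π_c - π_d) - E(β | defiers)·π_d/(π_c - π_d), where β(ω) = y₁(ω) - y₀(ω); in particular if π_d > 0 one of the two weights π_c/(π_c - π_d), -π_d/(π_c - π_d) is negative. -/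
open scoped Classical

noncomputable section

variable {Ω : Type*} [Fintype Ω]

/-- with both compliers and defiers, the Wald estimator is a
weighted average of the complier and defier treatment effects, with one
negative weight. -/
theorem wald_with_defiers
    (P : Ω → ℝ) (hP : ∀ ω, 0 ≤ P ω) (hPsum : ∑ ω, P ω = 1)
    (z : Ω → Bool) (x0 x1 : Ω → ℕ) (y0 y1 : Ω → ℝ)
    (hx0le : ∀ ω, x0 ω ≤ 1) (hx1le : ∀ ω, x1 ω ≤ 1)
    (x : Ω → ℕ) (hx : ∀ ω, x ω = if z ω then x1 ω else x0 ω)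
    (y : Ω → ℝ) (hy : ∀ ω, y ω = y0 ω + (y1 ω - y0 ω) * (x ω : ℝ))
    (hindep : ∀ g : ℕ → ℕ → ℝ → ℝ → ℝ,
      expec P (fun ω => (if z ω then (1 : ℝ) else 0) * g (x0 ω) (x1 ω) (y0 ω) (y1 ω))
        = expec P (fun ω => if z ω then (1 : ℝ) else 0)
            * expec P (fun ω => g (x0 ω) (x1 ω) (y0 ω) (y1 ω)))
    (hz1 : 0 < pr P (fun ω => z ω = true))
    (hz0 : 0 < pr P (fun ω => z ω = false))
    (πc πd : ℝ)
    (hπc : πc = pr P (fun ω => x0 ω = 0 ∧ x1 ω = 1))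
    (hπd : πd = pr P (fun ω => x0 ω = 1 ∧ x1 ω = 0))
    (hπcpos : 0 < πc) (hπdpos : 0 < πd) (hne : πc ≠ πd) :
    (condExp P y (fun ω => z ω = true) - condExp P y (fun ω => z ω = false))
        / (condExp P (fun ω => (x ω : ℝ)) (fun ω => z ω = true)
            - condExp P (fun ω => (x ω : ℝ)) (fun ω => z ω = false))
      = condExp P (fun ω => y1 ω - y0 ω) (fun ω => x0 ω = 0 ∧ x1 ω = 1)
          * (πc / (πc - πd))
        - condExp P (fun ω => y1 ω - y0 ω) (fun ω => x0 ω = 1 ∧ x1 ω = 0)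
          * (πd / (πc - πd)) ∧
    (πc / (πc - πd) < 0 ∨ -πd / (πc - πd) < 0) := by
  classical
  have hsub : πc - πd ≠ 0 := sub_ne_zero.mpr hne
  set p := pr P (fun ω => z ω = true) with hp
  have hpz : p = expec P (fun ω => if z ω then (1:ℝ) else 0) := by
    rw [hp]; unfold pr expec
    refine Finset.sum_congr rfl fun ω _ => ?_
    by_cases h : z ω <;> simp [h]
  have hq : pr P (fun ω => z ω = false) = 1 - p := by
    have hsum : pr P (fun ω => z ω = false) + p = 1 := by
      rw [hp]; unfold pr
      rw [← Finset.sum_add_distrib, ← hPsum]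
      refine Finset.sum_congr rfl fun ω _ => ?_
      by_cases h : z ω <;> simp [h]
    linarith
  -- key lemma: sum over z = true
  have key : ∀ (f : Ω → ℝ) (g : ℕ → ℕ → ℝ → ℝ → ℝ),
      (∀ ω, z ω = true → f ω = g (x0 ω) (x1 ω) (y0 ω) (y1 ω)) →
      (∑ ω, if z ω = true then P ω * f ω else 0)
        = p * expec P (fun ω => g (x0 ω) (x1 ω) (y0 ω) (y1 ω)) := by
    intro f g hfg
    have h1 : (∑ ω, if z ω = true then P ω * f ω else 0)
        = expec P (fun ω => (if z ω then (1:ℝ) else 0) * g (x0 ω) (x1 ω) (y0 ω) (y1 ω)) := by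
      unfold expec
      refine Finset.sum_congr rfl fun ω _ => ?_
      by_cases h : z ω
      · simp [h, hfg ω h]
      · simp [h]
    rw [h1, hindep g, ← hpz]
  have keyf : ∀ (f : Ω → ℝ) (g : ℕ → ℕ → ℝ → ℝ → ℝ),
      (∀ ω, z ω = false → f ω = g (x0 ω) (x1 ω) (y0 ω) (y1 ω)) →
      (∑ ω, if z ω = false then P ω * f ω else 0)
        = (1 - p) * expec P (fun ω => g (x0 ω) (x1 ω) (y0 ω) (y1 ω)) := by
    intro f g hfg
    have h1 : (∑ ω, if z ω = false then P ω * f ω else 0)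
        = expec P (fun ω => g (x0 ω) (x1 ω) (y0 ω) (y1 ω))
          - (∑ ω, if z ω = true then P ω * (g (x0 ω) (x1 ω) (y0 ω) (y1 ω)) else 0) := by
      unfold expec
      rw [← Finset.sum_sub_distrib]
      refine Finset.sum_congr rfl fun ω _ => ?_
      by_cases h : z ω
      · simp [h]
      · simp [h, hfg ω (by simp [h])]
    rw [h1, key _ g (fun ω _ => rfl)]
    ring
  have condExp_eq : ∀ (s : Ω → Prop) [DecidablePred s] (f : Ω → ℝ),
      condExp P f s = (∑ ω, if s ω then P ω * f ω else 0) / pr P s := by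
    intro s inst f
    unfold condExp
    congr 1
    refine Finset.sum_congr rfl fun ω _ => ?_
    rcases em (s ω) with h | h <;> simp [h]
  -- the four conditional expectations
  have cyt : condExp P y (fun ω => z ω = true)
      = expec P (fun ω => y0 ω + (y1 ω - y0 ω) * (x1 ω : ℝ)) := by
    rw [condExp_eq, ← hp]
    rw [key y (fun a b c d => c + (d - c) * (b : ℝ))
      (fun ω h => by rw [hy ω, hx ω, h]; simp)]
    exact mul_div_cancel_left₀ _ (ne_of_gt hz1)
  have cyf : condExp P y (fun ω => z ω = false)
      = expec P (fun ω => y0 ω + (y1 ω - y0 ω) * (x0 ω : ℝ)) := by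
    rw [condExp_eq, hq, keyf y (fun a b c d => c + (d - c) * (a : ℝ))
      (fun ω h => by rw [hy ω, hx ω, h]; simp)]
    have h1p : (1 : ℝ) - p ≠ 0 := by rw [← hq]; exact ne_of_gt hz0
    exact mul_div_cancel_left₀ _ h1p
  have cxt : condExp P (fun ω => (x ω : ℝ)) (fun ω => z ω = true)
      = expec P (fun ω => (x1 ω : ℝ)) := by
    rw [condExp_eq, ← hp]
    rw [key (fun ω => (x ω : ℝ)) (fun a b c d => (b : ℝ))
      (fun ω h => by simp [hx ω, h])]
    exact mul_div_cancel_left₀ _ (ne_of_gt hz1)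
  have cxf : condExp P (fun ω => (x ω : ℝ)) (fun ω => z ω = false)
      = expec P (fun ω => (x0 ω : ℝ)) := by
    rw [condExp_eq, hq, keyf (fun ω => (x ω : ℝ)) (fun a b c d => (a : ℝ))
      (fun ω h => by simp [hx ω, h])]
    have h1p : (1 : ℝ) - p ≠ 0 := by rw [← hq]; exact ne_of_gt hz0
    exact mul_div_cancel_left₀ _ h1p
  -- sums over compliers and defiers
  set Sc : ℝ := ∑ ω, if x0 ω = 0 ∧ x1 ω = 1 then P ω * (y1 ω - y0 ω) else 0 with hSc
  set Sd : ℝ := ∑ ω, if x0 ω = 1 ∧ x1 ω = 0 then P ω * (y1 ω - y0 ω) else 0 with hSd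
  have numdiff : expec P (fun ω => y0 ω + (y1 ω - y0 ω) * (x1 ω : ℝ))
      - expec P (fun ω => y0 ω + (y1 ω - y0 ω) * (x0 ω : ℝ)) = Sc - Sd := by
    rw [hSc, hSd]
    unfold expec
    rw [← Finset.sum_sub_distrib, ← Finset.sum_sub_distrib]
    refine Finset.sum_congr rfl fun ω _ => ?_
    rcases Nat.le_one_iff_eq_zero_or_eq_one.mp (hx0le ω) with h0 | h0 <;>
      rcases Nat.le_one_iff_eq_zero_or_eq_one.mp (hx1le ω) with h1 | h1 <;>
      simp [h0, h1] <;> ring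
  have dendiff : expec P (fun ω => (x1 ω : ℝ)) - expec P (fun ω => (x0 ω : ℝ))
      = πc - πd := by
    rw [hπc, hπd]
    unfold expec pr
    rw [← Finset.sum_sub_distrib, ← Finset.sum_sub_distrib]
    refine Finset.sum_congr rfl fun ω _ => ?_
    rcases Nat.le_one_iff_eq_zero_or_eq_one.mp (hx0le ω) with h0 | h0 <;>
      rcases Nat.le_one_iff_eq_zero_or_eq_one.mp (hx1le ω) with h1 | h1 <;>
      simp [h0, h1] <;> ring
  have cec : condExp P (fun ω => y1 ω - y0 ω) (fun ω => x0 ω = 0 ∧ x1 ω = 1)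
      = Sc / πc := by
    rw [condExp_eq, ← hπc]
  have ced : condExp P (fun ω => y1 ω - y0 ω) (fun ω => x0 ω = 1 ∧ x1 ω = 0)
      = Sd / πd := by
    rw [condExp_eq, ← hπd]
  constructor
  · rw [cyt, cyf, cxt, cxf, numdiff, dendiff, cec, ced]
    field_simp
    try ring
  · rcases lt_or_gt_of_ne hne with h | h
    · left
      apply div_neg_of_pos_of_neg hπcpos
      linarith
    · right
      apply div_neg_of_neg_of_pos (by linarith)
      linarith
end
end

section
/- In the heterogeneous persistence model with binary treatment, where units have effect β₁ with probability π₁ and β₂ with probability π₂ = 1 − π₁, and transition probabilities Pr(x_t = 0 | x_{t−h} = 0) = p_i and Pr(x_t = 1 | x_{t−h} = 1) = q_i for type i, the Wald estimator (E(y_t|x_{t−h}=1) − E(y_t|x_{t−h}=0)) / (E(x_t|x_{t−h}=1) − E(x_t|x_{t−h}=0)) equals (Σ_{i=1,2} π_i β_i (p_i + q_i − 1)) / (Σ_{i=1,2} π_i (p_i + q_i − 1)), provided the denominator Σ_i π_i (p_i + q_i − 1) is nonzero. -/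
open scoped Classical

noncomputable section

variable {Ω : Type*} [Fintype Ω]

/-- heterogeneous persistence model with two types
(false = type 1, true = type 2): the Wald estimator using the historical
treatment equals Σ πᵢβᵢ(pᵢ+qᵢ−1) / Σ πᵢ(pᵢ+qᵢ−1). -/
theorem wald_heterogeneous_persistence
    (P : Ω → ℝ) (hP : ∀ ω, 0 ≤ P ω) (hPsum : ∑ ω, P ω = 1)
    (τ : Ω → Bool)                         -- type of the unit
    (xh xt : Ω → Bool)                     -- historical and current treatment
    (β p q : Bool → ℝ) (π : Bool → ℝ)
    (hπ : ∀ i, π i = pr P (fun ω => τ ω = i))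
    (hπpos : ∀ i, 0 < π i)
    (hpq : ∀ i, 0 ≤ p i ∧ p i ≤ 1 ∧ 0 ≤ q i ∧ q i ≤ 1)
    -- historical treatment is independent of type
    (hindep : ∀ a i, pr P (fun ω => xh ω = a ∧ τ ω = i)
        = pr P (fun ω => xh ω = a) * pr P (fun ω => τ ω = i))
    -- Markov transitions: Pr(x_t = 0 | x_{t-h} = 0, type i) = pᵢ,
    -- Pr(x_t = 1 | x_{t-h} = 1, type i) = qᵢ
    (htrans0 : ∀ i, pr P (fun ω => xt ω = true ∧ xh ω = false ∧ τ ω = i)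
        = (1 - p i) * pr P (fun ω => xh ω = false ∧ τ ω = i))
    (htrans1 : ∀ i, pr P (fun ω => xt ω = true ∧ xh ω = true ∧ τ ω = i)
        = q i * pr P (fun ω => xh ω = true ∧ τ ω = i))
    (hh1 : 0 < pr P (fun ω => xh ω = true))
    (hh0 : 0 < pr P (fun ω => xh ω = false))
    (y : Ω → ℝ) (hy : ∀ ω, y ω = β (τ ω) * (if xt ω then 1 else 0))
    (hden : π false * (p false + q false - 1) + π true * (p true + q true - 1) ≠ 0) :
    (condExp P y (fun ω => xh ω = true) - condExp P y (fun ω => xh ω = false))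
        / (condExp P (fun ω => if xt ω then (1:ℝ) else 0) (fun ω => xh ω = true)
            - condExp P (fun ω => if xt ω then (1:ℝ) else 0) (fun ω => xh ω = false))
      = (π false * β false * (p false + q false - 1)
          + π true * β true * (p true + q true - 1))
        / (π false * (p false + q false - 1) + π true * (p true + q true - 1)) := by

  have hH1 := hh1.ne'
  have hH0 := hh0.ne'
  -- decompose numerator sums by type
  have e1 : ∀ (g : Bool → ℝ) (a : Bool),
      (∑ ω, @ite ℝ (xh ω = a) (Classical.propDecidable _)
          (P ω * (g (τ ω) * (if xt ω then (1:ℝ) else 0))) 0)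
      = g false * pr P (fun ω => xt ω = true ∧ xh ω = a ∧ τ ω = false)
      + g true * pr P (fun ω => xt ω = true ∧ xh ω = a ∧ τ ω = true) := by
    intro g a
    unfold pr
    rw [Finset.mul_sum, Finset.mul_sum, ← Finset.sum_add_distrib]
    apply Finset.sum_congr rfl
    intro ω _
    cases a <;> cases hτ : τ ω <;> cases hxt : xt ω <;> cases hxh : xh ω <;>
      simp [hτ, hxt, hxh] <;> ring
  have hjoint : ∀ a i, pr P (fun ω => xh ω = a ∧ τ ω = i)
      = pr P (fun ω => xh ω = a) * π i := by
    intro a i; rw [hindep a i, ← hπ]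
  -- values of the four conditional expectations
  have c1 : ∀ (g : Bool → ℝ),
      condExp P (fun ω => g (τ ω) * (if xt ω then (1:ℝ) else 0)) (fun ω => xh ω = true)
      = g false * q false * π false + g true * q true * π true := by
    intro g
    unfold condExp
    beta_reduce
    rw [e1 g true, htrans1 false, htrans1 true, hjoint, hjoint]
    field_simp
  have c0 : ∀ (g : Bool → ℝ),
      condExp P (fun ω => g (τ ω) * (if xt ω then (1:ℝ) else 0)) (fun ω => xh ω = false)
      = g false * (1 - p false) * π false + g true * (1 - p true) * π true := by
    intro g
    unfold condExp
    beta_reduce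
    rw [e1 g false, htrans0 false, htrans0 true, hjoint, hjoint]
    field_simp
  have hy' : y = fun ω => β (τ ω) * (if xt ω then (1:ℝ) else 0) := funext hy
  have hone : (fun ω => if xt ω then (1:ℝ) else 0)
      = fun ω => (fun _ : Bool => (1:ℝ)) (τ ω) * (if xt ω then (1:ℝ) else 0) := by
    funext ω; simp
  rw [hy', c1 β, c0 β, hone, c1 (fun _ => 1), c0 (fun _ => 1)]
  rw [show (1:ℝ) * q false * π false + 1 * q true * π true
      - (1 * (1 - p false) * π false + 1 * (1 - p true) * π true)
      = π false * (p false + q false - 1) + π true * (p true + q true - 1) by ring,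
    show β false * q false * π false + β true * q true * π true
      - (β false * (1 - p false) * π false + β true * (1 - p true) * π true)
      = π false * β false * (p false + q false - 1)
        + π true * β true * (p true + q true - 1) by ring]
end
end

section
/- In the heterogeneous persistence model with two types, if p₁ = p₂ and q₂ > q₁ and β₂ > β₁, then the Wald estimator (Σ_i π_i β_i (p_i + q_i − 1)) / (Σ_i π_i (p_i + q_i − 1)) is strictly greater than the average treatment effect π₁β₁ + π₂β₂, provided p_i + q_i − 1 > 0 for both types. -/
/-- With equal p's, higher persistence for the high-effect type
makes the Wald estimator exceed the ATE. -/
theorem wald_gt_ate (π₁ π₂ β₁ β₂ p q₁ q₂ : ℝ)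
    (hπ1 : 0 < π₁) (hπ2 : 0 < π₂) (hπ : π₁ + π₂ = 1)
    (hβ : β₁ < β₂) (hq : q₁ < q₂) (hpq : 0 < p + q₁ - 1) :
    π₁ * β₁ + π₂ * β₂ <
      (π₁ * β₁ * (p + q₁ - 1) + π₂ * β₂ * (p + q₂ - 1)) /
        (π₁ * (p + q₁ - 1) + π₂ * (p + q₂ - 1)) := by
  have hD : 0 < π₁ * (p + q₁ - 1) + π₂ * (p + q₂ - 1) := by nlinarith
  rw [lt_div_iff₀ hD]
  have h2 : π₂ = 1 - π₁ := by linarith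
  subst h2
  nlinarith [mul_pos (mul_pos hπ1 hπ2) (mul_pos (sub_pos.2 hβ) (sub_pos.2 hq))]
end
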